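/- Let X: ℝ → ℝ² be twice continuously differentiable and 2π-periodic. Then for every θ ∈ ℝ, ∫_{−π}^{π} M(θ,η) (X''(η) + R⁻¹X'(η)) dη = 0 ∈ ℝ². (This follows from the kernel identity ∂²_η M(θ,η) = ∂_η M(θ,η)·R⁻¹ after integration by parts over the period.) -/

import Mathlib

open Real intervalIntegral

/-- The matrix kernel
`M(θ,η) = (1/2)·[[1−cos(θ+η), −sin(θ+η)], [−sin(θ+η), 1+cos(θ+η)]]`. -/
noncomputable def Mmat (θ η : ℝ) : Matrix (Fin 2) (Fin 2) ℝ :=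
  (1 / 2 : ℝ) •
    !![1 - Real.cos (θ + η), -Real.sin (θ + η);
       -Real.sin (θ + η), 1 + Real.cos (θ + η)]

/-- The matrix `R⁻¹ = [[0,1],[−1,0]]`, inverse of the rotation by `π/2`. -/
noncomputable def Rinv : Matrix (Fin 2) (Fin 2) ℝ := !![0, 1; -1, 0]

/-- For a twice continuously differentiable `2π`-periodic `X : ℝ → ℝ²` and every `θ`,
`∫_{−π}^{π} M(θ,η)(X''(η) + R⁻¹X'(η)) dη = 0`. -/
theorem integral_Mmat_second_deriv (X : ℝ → Fin 2 → ℝ) (hX : ContDiff ℝ 2 X)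
    (hper : ∀ θ : ℝ, X (θ + 2 * π) = X θ) (θ : ℝ) :
    ∫ η in (-π)..π,
        (Mmat θ η).mulVec (deriv (deriv X) η + Rinv.mulVec (deriv X η)) = 0 := by
  have h2 : ContDiff ℝ ((1:WithTop ℕ∞)+1) X := by norm_num; exact hX
  obtain ⟨hdiff, -, h1⟩ := contDiff_succ_iff_deriv.mp h2
  obtain ⟨hdiff1, hc2⟩ := contDiff_one_iff_deriv.mp h1
  have hX1 : ∀ t, HasDerivAt X (deriv X t) t := fun t => (hdiff t).hasDerivAt
  have hX2 : ∀ t, HasDerivAt (deriv X) (deriv (deriv X) t) t := fun t => (hdiff1 t).hasDerivAt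
  have hper1 : ∀ t : ℝ, deriv X (t + 2 * π) = deriv X t := by
    intro t
    have hin : HasDerivAt (fun s : ℝ => s + 2 * π) 1 t := by
      simpa using (hasDerivAt_id t).add_const (2 * π)
    have h : HasDerivAt X (deriv X (t + 2 * π)) t := by
      have := ((hX1 (t + 2 * π)).scomp t hin)
      simp only [Function.comp_def, funext hper, one_smul] at this
      exact this
    exact h.unique (hX1 t)
  set F : ℝ → Fin 2 → ℝ := fun η =>
    ![ (1/2) * ((1 - cos (θ+η)) * deriv X η 0 - sin (θ+η) * deriv X η 1 + X η 1),
       (1/2) * (-sin (θ+η) * deriv X η 0 + (1 + cos (θ+η)) * deriv X η 1 - X η 0) ] with hF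
  have key : ∀ η : ℝ, HasDerivAt F
      ((Mmat θ η).mulVec (deriv (deriv X) η + Rinv.mulVec (deriv X η))) η := by
    intro η
    rw [hasDerivAt_pi]
    intro i
    have hcos : HasDerivAt (fun t : ℝ => cos (θ + t)) (-sin (θ + η)) η := by
      simpa [Function.comp_def] using (Real.hasDerivAt_cos (θ + η)).comp η ((hasDerivAt_id η).const_add θ)
    have hsin : HasDerivAt (fun t : ℝ => sin (θ + t)) (cos (θ + η)) η := by
      simpa [Function.comp_def] using (Real.hasDerivAt_sin (θ + η)).comp η ((hasDerivAt_id η).const_add θ)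
    have hx : ∀ j : Fin 2, HasDerivAt (fun t => X t j) (deriv X η j) η :=
      fun j => hasDerivAt_pi.mp (hX1 η) j
    have hx1 : ∀ j : Fin 2, HasDerivAt (fun t => deriv X t j) (deriv (deriv X) η j) η :=
      fun j => hasDerivAt_pi.mp (hX2 η) j
    fin_cases i
    · have h := (((((hasDerivAt_const η (1:ℝ)).sub hcos).mul (hx1 0)).sub
          (hsin.mul (hx1 1))).add (hx 1)).const_mul (1/2 : ℝ)
      have heq : (fun t => F t (0 : Fin 2)) =
          (fun t => (1/2) * ((1 - cos (θ+t)) * deriv X t 0 - sin (θ+t) * deriv X t 1 + X t 1)) := by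
        funext t; simp [hF]
      simp only [Fin.mk_zero, Fin.isValue]
      rw [heq]
      refine h.congr_deriv ?_
      simp [Mmat, Rinv, Matrix.mulVec, dotProduct, Fin.sum_univ_two]
      ring
    · have h := ((((hsin.neg.mul (hx1 0)).add
          (((hasDerivAt_const η (1:ℝ)).add hcos).mul (hx1 1))).sub (hx 0)).const_mul (1/2 : ℝ))
      have heq : (fun t => F t (1 : Fin 2)) =
          (fun t => (1/2) * (-sin (θ+t) * deriv X t 0 + (1 + cos (θ+t)) * deriv X t 1 - X t 0)) := by
        funext t; simp [hF]
      simp only [Fin.mk_one, Fin.isValue]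
      rw [heq]
      refine h.congr_deriv ?_
      simp [Mmat, Rinv, Matrix.mulVec, dotProduct, Fin.sum_univ_two]
      ring
  have hcX : ∀ j : Fin 2, Continuous fun a => X a j :=
    fun j => (continuous_apply j).comp hdiff.continuous
  have hcX1 : ∀ j : Fin 2, Continuous fun a => deriv X a j :=
    fun j => (continuous_apply j).comp hdiff1.continuous
  have hcX2 : ∀ j : Fin 2, Continuous fun a => deriv (deriv X) a j :=
    fun j => (continuous_apply j).comp hc2
  have hcont : Continuous fun η =>
      (Mmat θ η).mulVec (deriv (deriv X) η + Rinv.mulVec (deriv X η)) := by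
    apply continuous_pi
    intro i
    simp only [Mmat, Rinv, Matrix.mulVec, dotProduct, Fin.sum_univ_two]
    fin_cases i <;>
    · simp [Matrix.vecHead, Matrix.vecTail]
      continuity
  rw [intervalIntegral.integral_eq_sub_of_hasDerivAt (fun x _ => key x)
      (hcont.intervalIntegrable _ _)]
  have hXe : X π = X (-π) := by
    have := hper (-π); rwa [show -π + 2*π = π by ring] at this
  have hX1e : deriv X π = deriv X (-π) := by
    have := hper1 (-π); rwa [show -π + 2*π = π by ring] at this
  have hc : cos (θ + π) = cos (θ + -π) := by
    rw [show θ + π = (θ + -π) + 2 * π by ring, Real.cos_add_two_pi]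
  have hs : sin (θ + π) = sin (θ + -π) := by
    rw [show θ + π = (θ + -π) + 2 * π by ring, Real.sin_add_two_pi]
  simp only [hF]
  rw [hXe, hX1e, hc, hs]
  simp
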